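/- On R³, for any real parameters b₁,b₂,b₃,b₅, the (1,1)-tensor field K = b₁ dx₁² + b₂ dx₂² + b₃ dx₃² + b₅ (x₃dx₁ − x₁dx₃)², i.e. with matrix [[b₁ + b₅x₃², 0, −b₅x₁x₃], [0, b₂, 0], [−b₅x₁x₃, 0, b₃ + b₅x₁²]], has vanishing Haantjes tensor. -/

import Mathlib

open scoped BigOperators

/-- Partial derivative of a function on ℝⁿ in the `i`-th coordinate direction. -/
noncomputable def pd {n : ℕ} (i : Fin n) (f : (Fin n → ℝ) → ℝ) : (Fin n → ℝ) → ℝ :=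
  fun x => fderiv ℝ f x (Pi.single i 1)

/-- Nijenhuis tensor of a (1,1)-tensor field `A` on flat ℝⁿ. -/
noncomputable def nijenhuis {n : ℕ} (A : Fin n → Fin n → (Fin n → ℝ) → ℝ)
    (i j k : Fin n) (x : Fin n → ℝ) : ℝ :=
  ∑ a, (pd a (A i k) x * A a j x - pd a (A i j) x * A a k x
    + (pd k (A a j) x - pd j (A a k) x) * A i a x)

/-- Haantjes tensor of a (1,1)-tensor field `A` on flat ℝⁿ. -/
noncomputable def haantjes {n : ℕ} (A : Fin n → Fin n → (Fin n → ℝ) → ℝ)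
    (i j k : Fin n) (x : Fin n → ℝ) : ℝ :=
  ∑ a, ∑ b, (nijenhuis A b j k x * A i a x * A a b x
    + nijenhuis A i a b x * A a j x * A b k x
    - A i a x * (nijenhuis A a b k x * A b j x + nijenhuis A a j b x * A b k x))

/- ============ auxiliary derivative machinery ============ -/

abbrev prj3 (k : Fin 3) : (Fin 3 → ℝ) →L[ℝ] ℝ :=
  ContinuousLinearMap.proj (R := ℝ) (φ := fun _ : Fin 3 => ℝ) k

lemma hprj3 (k : Fin 3) (x : Fin 3 → ℝ) :
    HasFDerivAt (fun f : Fin 3 → ℝ => f k) (prj3 k) x :=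
  hasFDerivAt_apply k x

lemma pd_sq_two (b₁ b₅ : ℝ) (a : Fin 3) (x : Fin 3 → ℝ) :
    pd a (fun x : Fin 3 → ℝ => b₁ + b₅ * (x 2)^2) x
      = if (2:Fin 3) = a then 2*b₅*x 2 else 0 := by
  have h : HasFDerivAt (fun x : Fin 3 → ℝ => b₁ + b₅ * (x 2)^2)
      (b₅ • (x 2 • prj3 2 + x 2 • prj3 2)) x := by
    have := (((hprj3 2 x).mul (hprj3 2 x)).const_mul b₅).const_add b₁
    exact this.congr_of_eventuallyEq (Filter.Eventually.of_forall fun y => by simp only [Pi.mul_apply]; ring)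
  rw [pd, h.fderiv]
  simp [Pi.single_apply]; split <;> ring

lemma pd_sq_zero (b₃ b₅ : ℝ) (a : Fin 3) (x : Fin 3 → ℝ) :
    pd a (fun x : Fin 3 → ℝ => b₃ + b₅ * (x 0)^2) x
      = if (0:Fin 3) = a then 2*b₅*x 0 else 0 := by
  have h : HasFDerivAt (fun x : Fin 3 → ℝ => b₃ + b₅ * (x 0)^2)
      (b₅ • (x 0 • prj3 0 + x 0 • prj3 0)) x := by
    have := (((hprj3 0 x).mul (hprj3 0 x)).const_mul b₅).const_add b₃
    exact this.congr_of_eventuallyEq (Filter.Eventually.of_forall fun y => by simp only [Pi.mul_apply]; ring)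
  rw [pd, h.fderiv]
  simp [Pi.single_apply]; split <;> ring

lemma pd_cross (b₅ : ℝ) (a : Fin 3) (x : Fin 3 → ℝ) :
    pd a (fun x : Fin 3 → ℝ => -(b₅ * x 0 * x 2)) x =
      (if (0:Fin 3) = a then -(b₅ * x 2) else 0)
        + (if (2:Fin 3) = a then -(b₅ * x 0) else 0) := by
  have h : HasFDerivAt (fun x : Fin 3 → ℝ => -(b₅ * x 0 * x 2))
      (-((b₅ * x 0) • prj3 2 + x 2 • (b₅ • prj3 0))) x :=
    (((hprj3 0 x).const_mul b₅).mul (hprj3 2 x)).neg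
  rw [pd, h.fderiv]
  simp [Pi.single_apply]; split <;> split <;> ring

lemma pd_const (c : ℝ) (a : Fin 3) (x : Fin 3 → ℝ) :
    pd a (fun _ : Fin 3 → ℝ => c) x = 0 := by
  rw [pd, fderiv_fun_const]; simp


lemma fin3_cases (P : Fin 3 → Prop) (h0 : P 0) (h1 : P 1) (h2 : P 2) : ∀ i, P i := by
  intro i
  fin_cases i
  · exact h0
  · exact h1
  · exact h2

/-- explicit value of the Nijenhuis tensor of the SW I family -/
noncomputable def nijVal (b₁ b₃ b₅ : ℝ) : Fin 3 → Fin 3 → Fin 3 → (Fin 3 → ℝ) → ℝ :=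
  ![![![fun _ => 0, fun _ => 0, fun x => 2*b₅*x 2*(b₁-b₃+b₅*((x 0)^2+(x 2)^2))],
     ![fun _ => 0, fun _ => 0, fun _ => 0],
     ![fun x => -(2*b₅*x 2*(b₁-b₃+b₅*((x 0)^2+(x 2)^2))), fun _ => 0, fun _ => 0]],
    ![![fun _ => 0, fun _ => 0, fun _ => 0],
     ![fun _ => 0, fun _ => 0, fun _ => 0],
     ![fun _ => 0, fun _ => 0, fun _ => 0]],
    ![![fun _ => 0, fun _ => 0, fun x => 2*b₅*x 0*(b₁-b₃-b₅*((x 0)^2+(x 2)^2))],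
     ![fun _ => 0, fun _ => 0, fun _ => 0],
     ![fun x => -(2*b₅*x 0*(b₁-b₃-b₅*((x 0)^2+(x 2)^2))), fun _ => 0, fun _ => 0]]]

set_option maxHeartbeats 1600000 in
/-- The SW I family members with b₄ = b₆ = 0, i.e.
`K = b₁dx₁² + b₂dx₂² + b₃dx₃² + b₅(x₃dx₁ − x₁dx₃)²`, have vanishing Haantjes
tensor. -/
theorem stmt13 (b₁ b₂ b₃ b₅ : ℝ) (K : Fin 3 → Fin 3 → (Fin 3 → ℝ) → ℝ)
    (hK : ∀ x : Fin 3 → ℝ,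
      (fun i j => K i j x) =
        fun i j => (!![b₁ + b₅ * (x 2)^2, 0, -(b₅ * x 0 * x 2);
                      0, b₂, 0;
                      -(b₅ * x 0 * x 2), 0, b₃ + b₅ * (x 0)^2] :
                      Matrix (Fin 3) (Fin 3) ℝ) i j) :
    ∀ i j k : Fin 3, ∀ x : Fin 3 → ℝ, haantjes K i j k x = 0 := by
  have hKf : ∀ i j, K i j = fun x =>
      (!![b₁ + b₅ * (x 2)^2, 0, -(b₅ * x 0 * x 2);
          0, b₂, 0;
          -(b₅ * x 0 * x 2), 0, b₃ + b₅ * (x 0)^2] : Matrix (Fin 3) (Fin 3) ℝ) i j :=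
    fun i j => funext fun x => congrFun (congrFun (hK x) i) j
  have e00 : K 0 0 = fun x : Fin 3 → ℝ => b₁ + b₅ * (x 2)^2 := by
    rw [hKf]; funext x; simp
  have e01 : K 0 1 = fun _ : Fin 3 → ℝ => (0:ℝ) := by
    rw [hKf]; funext x; simp
  have e02 : K 0 2 = fun x : Fin 3 → ℝ => -(b₅ * x 0 * x 2) := by
    rw [hKf]; funext x; simp
  have e10 : K 1 0 = fun _ : Fin 3 → ℝ => (0:ℝ) := by
    rw [hKf]; funext x; simp
  have e11 : K 1 1 = fun _ : Fin 3 → ℝ => b₂ := by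
    rw [hKf]; funext x; simp
  have e12 : K 1 2 = fun _ : Fin 3 → ℝ => (0:ℝ) := by
    rw [hKf]; funext x; simp
  have e20 : K 2 0 = fun x : Fin 3 → ℝ => -(b₅ * x 0 * x 2) := by
    rw [hKf]; funext x; simp
  have e21 : K 2 1 = fun _ : Fin 3 → ℝ => (0:ℝ) := by
    rw [hKf]; funext x; simp
  have e22 : K 2 2 = fun x : Fin 3 → ℝ => b₃ + b₅ * (x 0)^2 := by
    rw [hKf]; funext x; simp
  have hn : ∀ i j k : Fin 3, ∀ x : Fin 3 → ℝ,
      nijenhuis K i j k x = nijVal b₁ b₃ b₅ i j k x := by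
    refine fin3_cases _ ?_ ?_ ?_ <;>
      refine fin3_cases _ ?_ ?_ ?_ <;>
        refine fin3_cases _ ?_ ?_ ?_ <;>
          · intro x
            simp only [nijenhuis, Fin.sum_univ_three, e00, e01, e02, e10, e11, e12, e20, e21,
              e22, pd_sq_two, pd_sq_zero, pd_cross, pd_const, nijVal, Matrix.cons_val_zero,
              Matrix.cons_val_one, Matrix.head_cons, Matrix.cons_val_two, Matrix.tail_cons,
              Fin.reduceEq, reduceIte]
            norm_num
            try ring
  refine fin3_cases _ ?_ ?_ ?_ <;>
    refine fin3_cases _ ?_ ?_ ?_ <;>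
      refine fin3_cases _ ?_ ?_ ?_ <;>
        · intro x
          simp only [haantjes, Fin.sum_univ_three, hn, e00, e01, e02, e10, e11, e12, e20, e21,
            e22, nijVal, Matrix.cons_val_zero, Matrix.cons_val_one, Matrix.head_cons,
            Matrix.cons_val_two, Matrix.tail_cons, Fin.reduceEq, reduceIte]
          norm_num
          try ring
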